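/- Let n ≥ 2 and suppose (T_n*, Y) is a tiling of the symmetric group S_n, where T_n* is the set of all transpositions in S_n. Then Y is k-transitive for every positive integer k with 2k ≤ n − 2. -/

import Mathlib

open Finset Function Equiv

/-- `(X, Y)` is a tiling of the group `G`: every element of `G` can be written as `x * y`
for a unique pair `(x, y) ∈ X × Y`. -/
def IsTiling {G : Type*} [Group G] (X Y : Set G) : Prop :=
  ∀ g : G, ∃! p : G × G, p.1 ∈ X ∧ p.2 ∈ Y ∧ p.1 * p.2 = g

/-- `T_n^*`: the set of all transpositions in the symmetric group `S_n`. -/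
def transpositions (n : ℕ) : Set (Equiv.Perm (Fin n)) :=
  {σ : Equiv.Perm (Fin n) | σ.IsSwap}


open scoped Classical in
noncomputable def Yfin {n : ℕ} (Y : Set (Equiv.Perm (Fin n))) : Finset (Equiv.Perm (Fin n)) :=
  Finset.univ.filter (· ∈ Y)

open scoped Classical in
noncomputable def Tfin (n : ℕ) : Finset (Equiv.Perm (Fin n)) :=
  Finset.univ.filter (·.IsSwap)

open scoped Classical in
noncomputable def Nf {n k : ℕ} (Y : Set (Equiv.Perm (Fin n))) (a b : Fin k → Fin n) : ℕ :=
  ((Yfin Y).filter (fun y => ∀ i, y (a i) = b i)).card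

open scoped Classical in
noncomputable def Cf {n k : ℕ} (a b : Fin k → Fin n) : ℕ :=
  ((Finset.univ : Finset (Equiv.Perm (Fin n))).filter (fun g => ∀ i, g (a i) = b i)).card

-- helper: swap equality characterization
lemma swap_eq_swap_cases {α : Type*} [DecidableEq α] {x y u v : α} (hxy : x ≠ y)
    (h : Equiv.swap x y = Equiv.swap u v) : (u = x ∧ v = y) ∨ (u = y ∧ v = x) := by
  have hu : Equiv.swap x y u = v := by rw [h]; simp
  by_cases h1 : u = x
  · subst h1; rw [Equiv.swap_apply_left] at hu; exact Or.inl ⟨rfl, hu.symm⟩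
  by_cases h2 : u = y
  · subst h2; rw [Equiv.swap_apply_right] at hu; exact Or.inr ⟨rfl, hu.symm⟩
  · rw [Equiv.swap_apply_of_ne_of_ne h1 h2] at hu
    exfalso
    have : Equiv.swap x y x = x := by rw [h, ← hu]; simp
    rw [Equiv.swap_apply_left] at this
    exact hxy this.symm

lemma exists_perm_comp {n k : ℕ} {f g : Fin k → Fin n} (hf : Injective f) (hg : Injective g) :
    ∃ σ : Equiv.Perm (Fin n), ∀ i, σ (f i) = g i := by
  classical
  let e : {x // x ∈ Set.range f} ≃ {x // x ∈ Set.range g} :=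
    (Equiv.ofInjective f hf).symm.trans (Equiv.ofInjective g hg)
  refine ⟨e.extendSubtype, fun i => ?_⟩
  rw [Equiv.extendSubtype_apply_of_mem e (f i) ⟨i, rfl⟩]
  show ((Equiv.ofInjective g hg) ((Equiv.ofInjective f hf).symm ⟨f i, ⟨i, rfl⟩⟩) : Fin n) = g i
  have : (Equiv.ofInjective f hf).symm ⟨f i, ⟨i, rfl⟩⟩ = i := by
    rw [Equiv.symm_apply_eq]; rfl
  rw [this]; rfl

open scoped Classical in
lemma tiling_count {n : ℕ} {Y : Set (Equiv.Perm (Fin n))}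
    (hT : IsTiling (transpositions n) Y) (P : Equiv.Perm (Fin n) → Prop) :
    (Finset.univ.filter P).card
      = ∑ τ ∈ Tfin n, ((Yfin Y).filter (fun y => P (τ * y))).card := by
  have himg : Finset.univ.filter P
      = (Tfin n).biUnion (fun τ => ((Yfin Y).filter (fun y => P (τ * y))).image (fun y => τ * y)) := by
    ext g
    simp only [mem_filter, mem_univ, true_and, mem_biUnion, mem_image, Tfin, Yfin]
    constructor
    · intro hg
      obtain ⟨p, ⟨hp1, hp2, hp3⟩, _⟩ := hT g
      exact ⟨p.1, by simpa [transpositions] using hp1, p.2, ⟨⟨by simp [hp2], by rw [hp3]; exact hg⟩, hp3⟩⟩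
    · rintro ⟨τ, _, y, ⟨⟨_, hy⟩, rfl⟩⟩
      exact hy
  rw [himg, Finset.card_biUnion]
  · refine Finset.sum_congr rfl fun τ _ => ?_
    exact Finset.card_image_of_injective _ (mul_right_injective τ)
  · intro τ1 h1 τ2 h2 hne
    simp only [Finset.disjoint_left, mem_image, mem_filter]
    rintro g ⟨y1, ⟨⟨hy1, _⟩, rfl⟩⟩ ⟨y2, ⟨⟨hy2, _⟩, heq⟩⟩
    simp only [Tfin, mem_filter, Yfin, mem_univ, true_and] at h1 h2 hy1 hy2
    obtain ⟨p, _, hup⟩ := hT (τ1 * y1)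
    have e1 : (τ1, y1) = p := hup (τ1, y1) ⟨by simpa [transpositions] using h1, hy1, rfl⟩
    have e2 : (τ2, y2) = p := hup (τ2, y2) ⟨by simpa [transpositions] using h2, hy2, heq⟩
    exact hne (by rw [← e2] at e1; exact congrArg Prod.fst e1)

open scoped Classical in
lemma sum_swap_offDiag {n : ℕ} (g : Equiv.Perm (Fin n) → ℕ) :
    ∑ p ∈ (Finset.univ : Finset (Fin n)).offDiag, g (Equiv.swap p.1 p.2)
      = 2 * ∑ τ ∈ Tfin n, g τ := by
  rw [← Finset.sum_filter_add_sum_filter_not (Finset.univ : Finset (Fin n)).offDiag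
    (fun p => p.1 < p.2)]
  have hL : ∑ p ∈ (Finset.univ : Finset (Fin n)).offDiag.filter (fun p => p.1 < p.2),
      g (Equiv.swap p.1 p.2) = ∑ τ ∈ Tfin n, g τ := by
    refine Finset.sum_bij (fun p _ => Equiv.swap p.1 p.2) ?_ ?_ ?_ ?_
    · intro p hp
      simp only [mem_filter, Finset.mem_offDiag] at hp
      simp only [Tfin, mem_filter, mem_univ, true_and]
      exact ⟨p.1, p.2, hp.1.2.2, rfl⟩
    · intro p hp q hq heq
      simp only [mem_filter, Finset.mem_offDiag] at hp hq
      rcases swap_eq_swap_cases hp.1.2.2 heq with ⟨h1, h2⟩ | ⟨h1, h2⟩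
      · exact Prod.ext h1.symm h2.symm
      · exfalso; rw [← h1, ← h2] at hp; exact absurd hq.2 (asymm hp.2)
    · intro τ hτ
      simp only [Tfin, mem_filter, mem_univ, true_and] at hτ
      obtain ⟨x, y, hxy, rfl⟩ := hτ
      rcases lt_or_gt_of_ne hxy with h | h
      · exact ⟨(x, y), by simp [Finset.mem_offDiag, hxy, h], rfl⟩
      · exact ⟨(y, x), by simp [Finset.mem_offDiag, hxy.symm, h], Equiv.swap_comm y x⟩
    · intros; rfl
  have hR : ∑ p ∈ (Finset.univ : Finset (Fin n)).offDiag.filter (fun p => ¬ p.1 < p.2),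
      g (Equiv.swap p.1 p.2)
      = ∑ p ∈ (Finset.univ : Finset (Fin n)).offDiag.filter (fun p => p.1 < p.2),
      g (Equiv.swap p.1 p.2) := by
    refine Finset.sum_nbij' (fun p => (p.2, p.1)) (fun p => (p.2, p.1)) ?_ ?_ ?_ ?_ ?_
    · intro p hp
      simp only [mem_filter, Finset.mem_offDiag] at hp ⊢
      exact ⟨⟨by simp, by simp, hp.1.2.2.symm⟩, lt_of_le_of_ne (not_lt.mp hp.2) hp.1.2.2.symm⟩
    · intro p hp
      simp only [mem_filter, Finset.mem_offDiag] at hp ⊢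
      exact ⟨⟨by simp, by simp, hp.1.2.2.symm⟩, not_lt.mpr (le_of_lt hp.2)⟩
    · intros; rfl
    · intros; rfl
    · intro p hp; exact congrArg g (Equiv.swap_comm p.1 p.2)
  rw [hL, hR, hL, two_mul]

lemma Cf_const {n k : ℕ} {a b a' b' : Fin k → Fin n} (ha : Injective a) (hb : Injective b)
    (ha' : Injective a') (hb' : Injective b') : Cf a b = Cf a' b' := by
  classical
  obtain ⟨u, hu⟩ := exists_perm_comp ha ha'
  obtain ⟨v, hv⟩ := exists_perm_comp hb hb'
  unfold Cf
  refine Finset.card_bij' (fun g _ => v * g * u⁻¹) (fun g _ => v⁻¹ * g * u) ?_ ?_ ?_ ?_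
  · intro g hg
    simp only [mem_filter, mem_univ, true_and] at hg ⊢
    intro i
    have : u⁻¹ (a' i) = a i := by rw [← hu i]; simp
    simp only [Equiv.Perm.mul_apply, this, hg i, hv i]
  · intro g hg
    simp only [mem_filter, mem_univ, true_and] at hg ⊢
    intro i
    have h1 : u (a i) = a' i := hu i
    simp only [Equiv.Perm.mul_apply, h1, hg i]
    rw [← hv i]; simp
  · intro g _; group
  · intro g _; group

open scoped Classical in
lemma Cf_eq_sum {n k : ℕ} {Y : Set (Equiv.Perm (Fin n))}
    (hT : IsTiling (transpositions n) Y) (a b : Fin k → Fin n) :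
    Cf a b = ∑ τ ∈ Tfin n, Nf Y a (fun i => τ (b i)) := by
  rw [Cf]
  have := tiling_count hT (fun g => ∀ i, g (a i) = b i)
  rw [Finset.filter_congr_decidable] at this
  rw [this]
  refine Finset.sum_congr rfl fun τ hτ => ?_
  simp only [Tfin, mem_filter, mem_univ, true_and] at hτ
  obtain ⟨x, y, hxy, rfl⟩ := hτ
  rw [Nf]
  congr 1
  ext z
  rw [Finset.filter_congr_decidable (Yfin Y) (fun y_1 => ∀ i : Fin k, (Equiv.swap x y * y_1) (a i) = b i), mem_filter]
  simp only [mem_filter, Equiv.Perm.mul_apply, and_congr_right_iff]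
  intro _
  constructor
  · intro h i; rw [← h i]; simp
  · intro h i; rw [h i]; simp

open scoped Classical in
lemma marginal {n k : ℕ} (Y : Set (Equiv.Perm (Fin n))) (a b : Fin (k+1) → Fin n)
    (ha : Injective a) (i : Fin (k+1)) :
    ∑ c ∈ Finset.univ \ Finset.image (fun j => b (i.succAbove j)) Finset.univ,
      Nf Y a (Function.update b i c)
    = Nf Y (fun j => a (i.succAbove j)) (fun j => b (i.succAbove j)) := by
  classical
  have hmaps : ∀ y ∈ (Yfin Y).filter (fun y => ∀ j, y (a (i.succAbove j)) = b (i.succAbove j)),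
      y (a i) ∈ Finset.univ \ Finset.image (fun j => b (i.succAbove j)) Finset.univ := by
    intro y hy
    simp only [mem_filter] at hy
    simp only [Finset.mem_sdiff, Finset.mem_univ, true_and, Finset.mem_image, not_exists]
    intro j
    intro hj
    rw [← hy.2 j] at hj
    exact Fin.succAbove_ne i j (ha (y.injective hj))
  have hfib := Finset.card_eq_sum_card_fiberwise hmaps
  rw [Nf]
  rw [Finset.filter_congr_decidable] at hfib
  rw [hfib]
  refine Finset.sum_congr rfl fun c hc => ?_
  rw [Nf]
  congr 1
  ext y
  simp only [mem_filter, and_assoc]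
  constructor
  · rintro ⟨hY, hall⟩
    refine ⟨hY, fun j => ?_, ?_⟩
    · have := hall (i.succAbove j)
      rwa [Function.update_of_ne (Fin.succAbove_ne i j)] at this
    · have := hall i
      rwa [Function.update_self] at this
  · rintro ⟨hY, hall, hcv⟩
    refine ⟨hY, fun j => ?_⟩
    by_cases hj : j = i
    · subst hj; rw [Function.update_self]; exact hcv
    · obtain ⟨j', rfl⟩ := Fin.exists_succAbove_eq hj
      rw [Function.update_of_ne (Fin.succAbove_ne i j')]
      exact hall j'

open scoped Classical in
lemma master {n k : ℕ} {Y : Set (Equiv.Perm (Fin n))} (hT : IsTiling (transpositions n) Y)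
    (r : ℕ)
    (hr : ∀ a' b' : Fin k → Fin n, Injective a' → Injective b' → Nf Y a' b' = r)
    (a b : Fin (k+1) → Fin n) (ha : Injective a) (hb : Injective b) :
    2 * Cf a b + 2 * (k+1) * Nf Y a b
      = ((n - (k+1)) * (n - (k+1)) - (n - (k+1))) * Nf Y a b + 2 * (k+1) * r
        + ∑ q ∈ (Finset.univ : Finset (Fin (k+1))).offDiag,
            Nf Y a (b ∘ ⇑(Equiv.swap q.1 q.2)) := by
  classical
  set B : Finset (Fin n) := Finset.image b Finset.univ with hBdef
  have hbB : ∀ i, b i ∈ B := fun i => Finset.mem_image.mpr ⟨i, Finset.mem_univ i, rfl⟩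
  have hnotB : ∀ {x : Fin n}, x ∉ B → ∀ l, b l ≠ x := by
    intro x hx l hl
    exact hx (hl ▸ hbB l)
  set D0 := (Finset.univ : Finset (Fin n)).offDiag with hD0
  set F : (Fin n × Fin n) → ℕ := fun p => Nf Y a (fun l => Equiv.swap p.1 p.2 (b l)) with hF
  have h2C : 2 * Cf a b = ∑ p ∈ D0, F p := by
    rw [Cf_eq_sum hT a b, ← sum_swap_offDiag (fun τ => Nf Y a (fun l => τ (b l)))]
  -- split into four parts
  have hsplit : ∑ p ∈ D0, F p
      = ∑ p ∈ (D0.filter (fun p => p.1 ∈ B)).filter (fun p => p.2 ∈ B), F p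
      + ∑ p ∈ (D0.filter (fun p => p.1 ∈ B)).filter (fun p => p.2 ∉ B), F p
      + ∑ p ∈ (D0.filter (fun p => p.1 ∉ B)).filter (fun p => p.2 ∈ B), F p
      + ∑ p ∈ (D0.filter (fun p => p.1 ∉ B)).filter (fun p => p.2 ∉ B), F p := by
    rw [← Finset.sum_filter_add_sum_filter_not D0 (fun p => p.1 ∈ B),
        ← Finset.sum_filter_add_sum_filter_not (D0.filter (fun p => p.1 ∈ B)) (fun p => p.2 ∈ B),
        ← Finset.sum_filter_add_sum_filter_not (D0.filter (fun p => p.1 ∉ B)) (fun p => p.2 ∈ B)]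
    ring
  -- part S00
  have hS00 : ∑ p ∈ (D0.filter (fun p => p.1 ∉ B)).filter (fun p => p.2 ∉ B), F p
      = ((n - (k+1)) * (n - (k+1)) - (n - (k+1))) * Nf Y a b := by
    have hsetEq : (D0.filter (fun p => p.1 ∉ B)).filter (fun p => p.2 ∉ B)
        = (Finset.univ \ B).offDiag := by
      ext p
      simp only [Finset.mem_filter, Finset.mem_offDiag, Finset.mem_sdiff, Finset.mem_univ,
        true_and, hD0]
      tauto
    have hcard : (Finset.univ \ B).card = n - (k+1) := by
      rw [Finset.card_sdiff_of_subset (Finset.subset_univ _), Finset.card_univ, Fintype.card_fin,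
        hBdef, Finset.card_image_of_injective _ hb, Finset.card_univ, Fintype.card_fin]
    have hconst : ∀ p ∈ (D0.filter (fun p => p.1 ∉ B)).filter (fun p => p.2 ∉ B),
        F p = Nf Y a b := by
      intro p hp
      simp only [Finset.mem_filter] at hp
      have h1 := hp.1.2
      have h2 := hp.2
      simp only [hF]
      congr 1
      funext l
      exact Equiv.swap_apply_of_ne_of_ne (hnotB h1 l) (hnotB h2 l)
    rw [Finset.sum_congr rfl hconst, Finset.sum_const, hsetEq, Finset.offDiag_card, hcard,
      smul_eq_mul]
  -- part S11
  have hS11 : ∑ p ∈ (D0.filter (fun p => p.1 ∈ B)).filter (fun p => p.2 ∈ B), F p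
      = ∑ q ∈ (Finset.univ : Finset (Fin (k+1))).offDiag,
          Nf Y a (b ∘ ⇑(Equiv.swap q.1 q.2)) := by
    refine (Finset.sum_bij (fun q (_ : q ∈ (Finset.univ : Finset (Fin (k+1))).offDiag)
      => (b q.1, b q.2)) ?_ ?_ ?_ ?_).symm
    · intro q hq
      simp only [Finset.mem_offDiag, Finset.mem_univ, true_and] at hq
      simp only [Finset.mem_filter, Finset.mem_offDiag, Finset.mem_univ, true_and, hD0]
      exact ⟨⟨hb.ne hq, hbB q.1⟩, hbB q.2⟩
    · intro q hq q' hq' heq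
      simp only [Prod.mk.injEq] at heq
      exact Prod.ext (hb heq.1) (hb heq.2)
    · intro p hp
      simp only [Finset.mem_filter, Finset.mem_offDiag, Finset.mem_univ, true_and, hD0] at hp
      obtain ⟨⟨hne, hi⟩, hj⟩ := hp
      obtain ⟨i, _, hi'⟩ := Finset.mem_image.mp hi
      obtain ⟨j, _, hj'⟩ := Finset.mem_image.mp hj
      refine ⟨(i, j), ?_, ?_⟩
      · simp only [Finset.mem_offDiag, Finset.mem_univ, true_and]
        rintro rfl
        rw [hi'] at hj'
        exact hne (hj' ▸ rfl)
      · exact Prod.ext hi' hj'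
    · intro q hq
      simp only [Finset.mem_offDiag, Finset.mem_univ, true_and] at hq
      simp only [hF]
      congr 1
      funext l
      simp only [Function.comp_apply]
      by_cases h1 : l = q.1
      · subst h1; rw [Equiv.swap_apply_left, Equiv.swap_apply_left]
      by_cases h2 : l = q.2
      · subst h2; rw [Equiv.swap_apply_right, Equiv.swap_apply_right]
      · rw [Equiv.swap_apply_of_ne_of_ne h1 h2,
          Equiv.swap_apply_of_ne_of_ne (fun h => h1 (hb h)) (fun h => h2 (hb h))]
  -- part S10
  have hS10 : ∑ p ∈ (D0.filter (fun p => p.1 ∈ B)).filter (fun p => p.2 ∉ B), F p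
      = ∑ i : Fin (k+1), ∑ c ∈ Finset.univ \ B, Nf Y a (Function.update b i c) := by
    rw [← Finset.sum_product']
    refine (Finset.sum_bij (fun q (_ : q ∈ (Finset.univ : Finset (Fin (k+1))) ×ˢ (Finset.univ \ B))
      => (b q.1, q.2)) ?_ ?_ ?_ ?_).symm
    · intro q hq
      simp only [Finset.mem_product, Finset.mem_sdiff, Finset.mem_univ, true_and] at hq
      simp only [Finset.mem_filter, Finset.mem_offDiag, Finset.mem_univ, true_and, hD0]
      exact ⟨⟨fun h => hq (by rw [← h]; exact hbB q.1), hbB q.1⟩, hq⟩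
    · intro q hq q' hq' heq
      simp only [Prod.mk.injEq] at heq
      exact Prod.ext (hb heq.1) heq.2
    · intro p hp
      simp only [Finset.mem_filter, Finset.mem_offDiag, Finset.mem_univ, true_and, hD0] at hp
      obtain ⟨⟨hne, hi⟩, hc⟩ := hp
      obtain ⟨i, _, hi'⟩ := Finset.mem_image.mp hi
      refine ⟨(i, p.2), ?_, ?_⟩
      · simp only [Finset.mem_product, Finset.mem_sdiff, Finset.mem_univ, true_and]
        exact hc
      · exact Prod.ext hi' rfl
    · intro q hq
      simp only [Finset.mem_product, Finset.mem_sdiff, Finset.mem_univ, true_and] at hq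
      simp only [hF]
      congr 1
      funext l
      by_cases h1 : l = q.1
      · subst h1; rw [Function.update_self, Equiv.swap_apply_left]
      · rw [Function.update_of_ne h1,
          Equiv.swap_apply_of_ne_of_ne (fun h => h1 (hb h)) (hnotB hq l)]
  -- part S01
  have hS01 : ∑ p ∈ (D0.filter (fun p => p.1 ∉ B)).filter (fun p => p.2 ∈ B), F p
      = ∑ i : Fin (k+1), ∑ c ∈ Finset.univ \ B, Nf Y a (Function.update b i c) := by
    rw [← Finset.sum_product']
    refine (Finset.sum_bij (fun q (_ : q ∈ (Finset.univ : Finset (Fin (k+1))) ×ˢ (Finset.univ \ B))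
      => (q.2, b q.1)) ?_ ?_ ?_ ?_).symm
    · intro q hq
      simp only [Finset.mem_product, Finset.mem_sdiff, Finset.mem_univ, true_and] at hq
      simp only [Finset.mem_filter, Finset.mem_offDiag, Finset.mem_univ, true_and, hD0]
      exact ⟨⟨fun h => hq (by rw [h]; exact hbB q.1), hq⟩, hbB q.1⟩
    · intro q hq q' hq' heq
      simp only [Prod.mk.injEq] at heq
      exact Prod.ext (hb heq.2) heq.1
    · intro p hp
      simp only [Finset.mem_filter, Finset.mem_offDiag, Finset.mem_univ, true_and, hD0] at hp
      obtain ⟨⟨hne, hc⟩, hi⟩ := hp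
      obtain ⟨i, _, hi'⟩ := Finset.mem_image.mp hi
      refine ⟨(i, p.1), ?_, ?_⟩
      · simp only [Finset.mem_product, Finset.mem_sdiff, Finset.mem_univ, true_and]
        exact hc
      · exact Prod.ext rfl hi'
    · intro q hq
      simp only [Finset.mem_product, Finset.mem_sdiff, Finset.mem_univ, true_and] at hq
      simp only [hF]
      rw [Equiv.swap_comm]
      congr 1
      funext l
      by_cases h1 : l = q.1
      · subst h1; rw [Function.update_self, Equiv.swap_apply_left]
      · rw [Function.update_of_ne h1,
          Equiv.swap_apply_of_ne_of_ne (fun h => h1 (hb h)) (hnotB hq l)]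
  -- per-index marginal identity
  have hE : ∀ i : Fin (k+1),
      (∑ c ∈ Finset.univ \ B, Nf Y a (Function.update b i c)) + Nf Y a b = r := by
    intro i
    have hset : Finset.univ \ Finset.image (fun j => b (i.succAbove j)) Finset.univ
        = insert (b i) (Finset.univ \ B) := by
      ext x
      simp only [Finset.mem_sdiff, Finset.mem_univ, true_and, Finset.mem_insert,
        Finset.mem_image, not_exists, hBdef]
      constructor
      · intro hx
        by_cases hxB : ∃ j, b j = x
        · obtain ⟨j, rfl⟩ := hxB
          left
          by_cases hj : j = i
          · rw [hj]
          · obtain ⟨j', rfl⟩ := Fin.exists_succAbove_eq hj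
            exact absurd rfl (hx j')
        · right
          push_neg at hxB
          intro j h
          exact hxB j h
      · rintro (rfl | hx)
        · intro j h
          exact Fin.succAbove_ne i j (hb h)
        · intro j h
          exact hx (i.succAbove j) h
    have hmarg := marginal Y a b ha i
    rw [hset, Finset.sum_insert (by simp [hbB i])] at hmarg
    rw [Function.update_eq_self] at hmarg
    have hIH : Nf Y (fun j => a (i.succAbove j)) (fun j => b (i.succAbove j)) = r :=
      hr _ _ (ha.comp Fin.succAbove_right_injective) (hb.comp Fin.succAbove_right_injective)
    rw [hIH] at hmarg
    omega
  have hCsum : (∑ i : Fin (k+1), ∑ c ∈ Finset.univ \ B, Nf Y a (Function.update b i c))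
      + (k+1) * Nf Y a b = (k+1) * r := by
    have : ∑ i : Fin (k+1),
        ((∑ c ∈ Finset.univ \ B, Nf Y a (Function.update b i c)) + Nf Y a b)
        = ∑ i : Fin (k+1), r := Finset.sum_congr rfl (fun i _ => hE i)
    rw [Finset.sum_add_distrib, Finset.sum_const, Finset.sum_const, Finset.card_univ,
      Fintype.card_fin, smul_eq_mul, smul_eq_mul] at this
    exact this
  calc 2 * Cf a b + 2 * (k+1) * Nf Y a b
      = (∑ p ∈ (D0.filter (fun p => p.1 ∈ B)).filter (fun p => p.2 ∈ B), F p)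
        + ((∑ p ∈ (D0.filter (fun p => p.1 ∈ B)).filter (fun p => p.2 ∉ B), F p)
            + (k+1) * Nf Y a b)
        + ((∑ p ∈ (D0.filter (fun p => p.1 ∉ B)).filter (fun p => p.2 ∈ B), F p)
            + (k+1) * Nf Y a b)
        + (∑ p ∈ (D0.filter (fun p => p.1 ∉ B)).filter (fun p => p.2 ∉ B), F p) := by
        rw [h2C, hsplit]; ring
    _ = (∑ q ∈ (Finset.univ : Finset (Fin (k+1))).offDiag, Nf Y a (b ∘ ⇑(Equiv.swap q.1 q.2)))
        + ((k+1) * r) + ((k+1) * r)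
        + ((n - (k+1)) * (n - (k+1)) - (n - (k+1))) * Nf Y a b := by
        rw [hS11, hS00, hS10, hS01, hCsum]
    _ = ((n - (k+1)) * (n - (k+1)) - (n - (k+1))) * Nf Y a b + 2 * (k+1) * r
        + ∑ q ∈ (Finset.univ : Finset (Fin (k+1))).offDiag,
            Nf Y a (b ∘ ⇑(Equiv.swap q.1 q.2)) := by ring

lemma key {n : ℕ} {Y : Set (Equiv.Perm (Fin n))} (hT : IsTiling (transpositions n) Y) :
    ∀ k : ℕ, 2 * k + 2 ≤ n →
      ∃ r : ℕ, ∀ a b : Fin k → Fin n, Injective a → Injective b → Nf Y a b = r := by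
  intro k
  induction k with
  | zero =>
    intro _
    refine ⟨(Yfin Y).card, fun a b _ _ => ?_⟩
    rw [Nf, Finset.filter_true_of_mem (fun y _ => fun i => i.elim0)]
  | succ k IH =>
    intro hkn
    obtain ⟨r, hr⟩ := IH (by omega)
    set K := k + 1 with hK
    set A := (n - K) * (n - K) - (n - K) with hA
    set B' := K * K - K with hB'
    have hm : k + 3 ≤ n - K := by omega
    have hineq : B' + 2 * K + 1 ≤ A := by
      obtain ⟨d, hd⟩ := Nat.exists_eq_add_of_le hm
      have e1 : A = (n - K) * (n - K) - (n - K) := hA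
      have e1' : (k + 3 + d) * (k + 3 + d) = (k + 3 + d) * (k + 2 + d) + (k + 3 + d) := by ring
      rw [← hd] at e1'
      have e2 : K * K = (k + 1) * k + K := by rw [hK]; ring
      have hA2 : A = (n - K) * (k + 2 + d) := by omega
      have hB2 : B' = (k + 1) * k := by omega
      rw [hA2, hB2, hK, hd]
      nlinarith
    -- the number of offDiag pairs in Fin K
    have hcardOff : ((Finset.univ : Finset (Fin K)).offDiag).card = B' := by
      rw [Finset.offDiag_card, Finset.card_univ, Fintype.card_fin, hB']
    -- master equation specialized
    have hmaster : ∀ (a b : Fin K → Fin n), Injective a → Injective b →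
        2 * Cf a b + 2 * K * Nf Y a b
          = A * Nf Y a b + 2 * K * r
            + ∑ q ∈ (Finset.univ : Finset (Fin K)).offDiag,
                Nf Y a (b ∘ ⇑(Equiv.swap q.1 q.2)) := by
      intro a b ha hb
      exact master hT r hr a b ha hb
    -- step 1: for fixed injective a b, Nf is invariant under permuting b
    have hperm : ∀ (a b : Fin K → Fin n), Injective a → Injective b →
        ∀ π : Equiv.Perm (Fin K), Nf Y a (b ∘ ⇑π) = Nf Y a b := by
      intro a b ha hb
      set f : Equiv.Perm (Fin K) → ℕ := fun π => Nf Y a (b ∘ ⇑π) with hf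
      have hcomp : ∀ (π σ : Equiv.Perm (Fin K)), (b ∘ ⇑π) ∘ ⇑σ = b ∘ ⇑(π * σ) := by
        intro π σ; funext l; rfl
      have hCf : ∀ π : Equiv.Perm (Fin K), Cf a (b ∘ ⇑π) = Cf a b := by
        intro π
        exact Cf_const ha (hb.comp π.injective) ha hb
      have hmaster' : ∀ π : Equiv.Perm (Fin K),
          2 * Cf a b + 2 * K * f π
            = A * f π + 2 * K * r
              + ∑ q ∈ (Finset.univ : Finset (Fin K)).offDiag, f (π * Equiv.swap q.1 q.2) := by
        intro π
        have h := hmaster a (b ∘ ⇑π) ha (hb.comp π.injective)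
        rw [hCf π] at h
        have hs : ∀ q : Fin K × Fin K,
            Nf Y a ((b ∘ ⇑π) ∘ ⇑(Equiv.swap q.1 q.2)) = f (π * Equiv.swap q.1 q.2) :=
          fun q => congrArg (Nf Y a) (hcomp π (Equiv.swap q.1 q.2))
        rw [Finset.sum_congr rfl (fun q _ => hs q)] at h
        exact h
      obtain ⟨πM, _, hM⟩ := Finset.exists_max_image Finset.univ f ⟨1, Finset.mem_univ 1⟩
      obtain ⟨πm, _, hmn⟩ := Finset.exists_min_image Finset.univ f ⟨1, Finset.mem_univ 1⟩
      have hMm : f πm ≤ f πM := hM πm (Finset.mem_univ _)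
      have hub : ∀ π, f π ≤ f πM := fun π => hM π (Finset.mem_univ _)
      have hlb : ∀ π, f πm ≤ f π := fun π => hmn π (Finset.mem_univ _)
      have ineq1 : A * f πM + 2 * K * r + B' * f πm ≤ 2 * Cf a b + 2 * K * f πM := by
        have hS : B' * f πm ≤ ∑ q ∈ (Finset.univ : Finset (Fin K)).offDiag,
            f (πM * Equiv.swap q.1 q.2) := by
          calc B' * f πm = ((Finset.univ : Finset (Fin K)).offDiag).card • f πm := by
                rw [hcardOff, smul_eq_mul]
            _ ≤ _ := Finset.card_nsmul_le_sum _ _ _ (fun q _ => hlb _)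
        have := hmaster' πM
        omega
      have ineq2 : 2 * Cf a b + 2 * K * f πm ≤ A * f πm + 2 * K * r + B' * f πM := by
        have hS : (∑ q ∈ (Finset.univ : Finset (Fin K)).offDiag,
            f (πm * Equiv.swap q.1 q.2)) ≤ B' * f πM := by
          calc (∑ q ∈ (Finset.univ : Finset (Fin K)).offDiag, f (πm * Equiv.swap q.1 q.2))
              ≤ ((Finset.univ : Finset (Fin K)).offDiag).card • f πM :=
                Finset.sum_le_card_nsmul _ _ _ (fun q _ => hub _)
            _ = B' * f πM := by rw [hcardOff, smul_eq_mul]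
        have := hmaster' πm
        omega
      have hMeq : f πM = f πm := by
        have h3 : A * f πM + B' * f πm + 2 * K * f πm
            ≤ 2 * K * f πM + A * f πm + B' * f πM := by omega
        have hle : f πM ≤ f πm := by
          zify at h3 hineq hMm ⊢
          nlinarith [mul_le_mul_of_nonneg_right
            (show (1 : ℤ) ≤ (A : ℤ) - (B' : ℤ) - 2 * ((k : ℤ) + 1) from by linarith)
            (show (0 : ℤ) ≤ ((f πM : ℤ) - (f πm : ℤ)) from by linarith)]
        exact le_antisymm hle hMm
      intro π
      have h1 : f π = f πM := le_antisymm (hub π) (hMeq ▸ hlb π)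
      have h2 : f 1 = f πM := le_antisymm (hub 1) (hMeq ▸ hlb 1)
      have h3 : f 1 = Nf Y a b := congrArg (Nf Y a) (by funext l; rfl)
      show f π = Nf Y a b
      rw [h1, ← h2, h3]
    -- step 2: the value is pinned by the linear equation
    have hpin : ∀ (a b : Fin K → Fin n), Injective a → Injective b →
        A * Nf Y a b + B' * Nf Y a b + 2 * K * r = 2 * Cf a b + 2 * K * Nf Y a b := by
      intro a b ha hb
      have hm' := hmaster a b ha hb
      have hsum : ∑ q ∈ (Finset.univ : Finset (Fin K)).offDiag,
          Nf Y a (b ∘ ⇑(Equiv.swap q.1 q.2)) = B' * Nf Y a b := by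
        rw [Finset.sum_congr rfl (fun q hq => hperm a b ha hb (Equiv.swap q.1 q.2)),
          Finset.sum_const, hcardOff, smul_eq_mul]
      omega
    have hcast : (K : ℕ) ≤ n := by omega
    set a0 : Fin K → Fin n := Fin.castLE hcast with ha0
    have ha0inj : Injective a0 := Fin.castLE_injective hcast
    refine ⟨Nf Y a0 a0, fun a b ha hb => ?_⟩
    have e1 := hpin a b ha hb
    have e2 := hpin a0 a0 ha0inj ha0inj
    have eC : Cf a b = Cf a0 a0 := Cf_const ha hb ha0inj ha0inj
    rw [eC] at e1
    set u := Nf Y a b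
    set v := Nf Y a0 a0
    zify at e1 e2 hineq
    have hz : ((A : ℤ) + (B' : ℤ) - 2 * ((k : ℤ) + 1)) * ((u : ℤ) - (v : ℤ)) = 0 := by
      have hKz : (K : ℤ) = k + 1 := by omega
      linear_combination e1 - e2 + 2 * ((u : ℤ) - v) * hKz
    have hB0 : (0 : ℤ) ≤ (B' : ℤ) := by positivity
    have hcoef : ((A : ℤ) + (B' : ℤ) - 2 * ((k : ℤ) + 1)) ≠ 0 := by linarith
    rcases mul_eq_zero.mp hz with h | h
    · exact absurd h hcoef
    · have : (u : ℤ) = v := by linarith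
      exact_mod_cast this

theorem k_transitive_of_transposition_tiling (n : ℕ) (hn : 2 ≤ n)
    (Y : Set (Equiv.Perm (Fin n))) (hT : IsTiling (transpositions n) Y)
    (k : ℕ) (hk : 0 < k) (hkn : 2 * k ≤ n - 2) :
    ∃ r : ℕ, 0 < r ∧
      ∀ a b : Fin k → Fin n, Function.Injective a → Function.Injective b →
        {y ∈ Y | ∀ i, y (a i) = b i}.ncard = r := by
  classical
  have hkn' : 2 * k + 2 ≤ n := by omega
  obtain ⟨r, hr⟩ := key hT k hkn'
  have hk_le : k ≤ n := by omega
  set a0 : Fin k → Fin n := Fin.castLE hk_le with ha0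
  have ha0inj : Function.Injective a0 := Fin.castLE_injective hk_le
  obtain ⟨p, ⟨hp1, hp2, hp3⟩, _⟩ := hT 1
  set y0 := p.2 with hy0
  have hb0inj : Function.Injective (fun i => y0 (a0 i)) := fun i j h => ha0inj (y0.injective h)
  have hpos : 0 < r := by
    rw [← hr a0 (fun i => y0 (a0 i)) ha0inj hb0inj, Nf]
    refine Finset.card_pos.mpr ⟨y0, ?_⟩
    simp only [Finset.mem_filter, Yfin, Finset.mem_univ, true_and]
    exact ⟨hp2, fun _ => trivial⟩
  refine ⟨r, hpos, fun a b ha hb => ?_⟩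
  have hset : {y ∈ Y | ∀ i, y (a i) = b i}
      = ↑((Yfin Y).filter fun y => ∀ i, y (a i) = b i) := by
    ext y
    simp [Yfin, Finset.mem_filter, Set.mem_setOf_eq]
  rw [hset, Set.ncard_coe_finset]
  exact hr a b ha hb
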